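/- For any u ∈ L²₊(T), any 1 ≤ n ≤ ∞ and any κ ≥ 1, the operator f ↦ u · Π_n(ū · Π_n R₀(κ) f) on L²₊ is bounded with operator norm at most 2‖u‖²_{L²}. -/

import Mathlib

open scoped ComplexConjugate

noncomputable section

/-- The squared-summed `ℓ²` norm of a sequence of Fourier coefficients
(`= L²` norm of the corresponding function on the torus, by Plancherel). -/
def l2norm {ι : Type*} (a : ι → ℂ) : ℝ := Real.sqrt (∑' k, ‖a k‖ ^ 2)

/-- The Fourier truncation `Π_n` onto frequencies `0 ≤ k < n` (with `Π_∞ = Π`),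
acting on Hardy-space Fourier coefficients. -/
def trunc (n : ℕ∞) (a : ℕ → ℂ) : ℕ → ℂ := fun k => if (k : ℕ∞) < n then a k else 0

/-- The free resolvent `R₀(κ) = (-i∂ₓ + κ)⁻¹` on the Hardy space, as the Fourier
multiplier with symbol `1/(k+κ)`. -/
def res (κ : ℝ) (a : ℕ → ℂ) : ℕ → ℂ := fun k => a k / ((k : ℂ) + κ)

/-- Fourier coefficients of the product `u · b` of a general `L²(𝕋)` function `u`
(coefficients indexed by `ℤ`) with a Hardy-space function `b`. -/
def mulZ (u : ℤ → ℂ) (b : ℕ → ℂ) : ℤ → ℂ := fun k => ∑' l : ℕ, u (k - (l : ℤ)) * b l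

/-- Fourier coefficients of the product `u · b` of two Hardy-space functions. -/
def mulH (u b : ℕ → ℂ) : ℕ → ℂ :=
  fun k => (Finset.range (k + 1)).sum fun l => u (k - l) * b l

/-- Nonnegative Fourier coefficients of the product `conj u · b` for Hardy-space
functions `u, b`: `(ū·b)^(k) = ∑_{l≥0} conj(û(l)) b̂(l+k)` for `k ≥ 0`. -/
def mulConjH (u b : ℕ → ℂ) : ℕ → ℂ := fun k => ∑' l : ℕ, conj (u l) * b (l + k)

/-- summability of a product from square-summability of the factors -/
lemma summable_mul_sq {f g : ℕ → ℝ} (hf0 : ∀ i, 0 ≤ f i) (hg0 : ∀ i, 0 ≤ g i)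
    (hf : Summable fun i => f i ^ 2) (hg : Summable fun i => g i ^ 2) :
    Summable fun i => f i * g i := by
  refine Summable.of_nonneg_of_le (fun i => mul_nonneg (hf0 i) (hg0 i))
    (fun i => ?_) (((hf.add hg).div_const 2))
  nlinarith [sq_nonneg (f i - g i)]

/-- Cauchy–Schwarz for infinite sums of nonnegative reals. -/
lemma tsum_mul_le_sqrt {f g : ℕ → ℝ} (hf0 : ∀ i, 0 ≤ f i) (hg0 : ∀ i, 0 ≤ g i)
    (hf : Summable fun i => f i ^ 2) (hg : Summable fun i => g i ^ 2) :
    ∑' i, f i * g i ≤ Real.sqrt (∑' i, f i ^ 2) * Real.sqrt (∑' i, g i ^ 2) := by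
  refine Summable.tsum_le_of_sum_le (summable_mul_sq hf0 hg0 hf hg) fun s => ?_
  have h1 : (∑ i ∈ s, f i * g i) ^ 2 ≤ (∑ i ∈ s, f i ^ 2) * ∑ i ∈ s, g i ^ 2 :=
    Finset.sum_mul_sq_le_sq_mul_sq s f g
  have h2 : (∑ i ∈ s, f i ^ 2) * ∑ i ∈ s, g i ^ 2
      ≤ (∑' i, f i ^ 2) * ∑' i, g i ^ 2 := by
    have := Summable.sum_le_tsum s (fun i _ => sq_nonneg (f i)) hf
    have := Summable.sum_le_tsum s (fun i _ => sq_nonneg (g i)) hg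
    have h3 : 0 ≤ ∑ i ∈ s, f i ^ 2 := Finset.sum_nonneg fun i _ => sq_nonneg _
    have h4 : 0 ≤ ∑ i ∈ s, g i ^ 2 := Finset.sum_nonneg fun i _ => sq_nonneg _
    exact mul_le_mul ‹_› ‹_› h4 ((h3.trans ‹_›))
  have := Real.le_sqrt_of_sq_le (h1.trans h2)
  rwa [Real.sqrt_mul (tsum_nonneg fun i => sq_nonneg (f i))] at this

/-- the weight sequence `c m / (m+1)` -/
def alf (c : ℕ → ℝ) (m : ℕ) : ℝ := c m / (m + 1)

/-- tail sums of `alf` -/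
def tl (c : ℕ → ℝ) (l : ℕ) : ℝ := ∑' r, alf c (r + l)


section copson

lemma alf_nonneg {c : ℕ → ℝ} (hc0 : ∀ m, 0 ≤ c m) (m : ℕ) : 0 ≤ alf c m :=
  div_nonneg (hc0 m) (by positivity)

lemma summable_inv_sq : Summable fun m : ℕ => (1 / ((m : ℝ) + 1)) ^ 2 := by
  have h := (summable_nat_add_iff 1).2 (Real.summable_one_div_nat_pow.2 one_lt_two)
  refine h.congr fun n => ?_
  push_cast
  rw [div_pow, one_pow]

lemma summable_alf {c : ℕ → ℝ} (hc0 : ∀ m, 0 ≤ c m) (hc : Summable fun m => c m ^ 2) :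
    Summable (alf c) := by
  refine (summable_mul_sq hc0 (fun m => by positivity) hc summable_inv_sq).congr fun m => ?_
  rw [mul_one_div]; rfl

lemma summable_alf_add {c : ℕ → ℝ} (hc0 : ∀ m, 0 ≤ c m) (hc : Summable fun m => c m ^ 2)
    (l : ℕ) : Summable fun r => alf c (l + r) :=
  ((summable_nat_add_iff l).2 (summable_alf hc0 hc)).congr fun r => by rw [add_comm]

lemma tl_eq (c : ℕ → ℝ) (l : ℕ) : tl c l = ∑' r, alf c (l + r) :=
  tsum_congr fun r => by rw [add_comm]

lemma tl_nonneg {c : ℕ → ℝ} (hc0 : ∀ m, 0 ≤ c m) (l : ℕ) : 0 ≤ tl c l :=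
  tsum_nonneg fun r => alf_nonneg hc0 _

lemma tl_succ {c : ℕ → ℝ} (hc0 : ∀ m, 0 ≤ c m) (hc : Summable fun m => c m ^ 2) (l : ℕ) :
    tl c l = alf c l + tl c (l + 1) := by
  rw [tl_eq, tl_eq]
  rw [Summable.tsum_eq_zero_add ((summable_alf_add hc0 hc l))]
  have h1 : l + 0 = l := by omega
  rw [h1]
  congr 1
  exact tsum_congr fun r => by congr 1; omega

lemma copson_ind {c : ℕ → ℝ} (hc0 : ∀ m, 0 ≤ c m) (hc : Summable fun m => c m ^ 2) (N : ℕ) :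
    ∑ l ∈ Finset.range N, tl c l ^ 2
      ≤ 2 * ∑ l ∈ Finset.range N, c l * tl c l + N * tl c N ^ 2 := by
  induction N with
  | zero => simp
  | succ N ih =>
    rw [Finset.sum_range_succ, Finset.sum_range_succ]
    have hsplit := tl_succ hc0 hc N
    have hx : 0 ≤ alf c N := alf_nonneg hc0 N
    have ht : 0 ≤ tl c (N + 1) := tl_nonneg hc0 N.succ
    have hcN : c N = ((N : ℝ) + 1) * alf c N := by
      have h1 : ((N : ℝ) + 1) ≠ 0 := by positivity
      rw [alf]; field_simp
    have hN : (0 : ℝ) ≤ N := Nat.cast_nonneg N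
    rw [hsplit] at ih ⊢
    rw [hcN]
    push_cast
    nlinarith [mul_nonneg hN (sq_nonneg (alf c N)), sq_nonneg (alf c N)]

lemma tail_sq_bound {c : ℕ → ℝ} (hc0 : ∀ m, 0 ≤ c m) (hc : Summable fun m => c m ^ 2) (N : ℕ) :
    (N : ℝ) * tl c N ^ 2 ≤ ∑' m, c (m + N) ^ 2 := by
  rcases Nat.eq_zero_or_pos N with h | h
  · simp only [h, Nat.cast_zero, zero_mul]
    exact tsum_nonneg fun m => sq_nonneg _
  have hNpos : (0 : ℝ) < N := by exact_mod_cast h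
  set g : ℕ → ℝ := fun r => 1 / ((N : ℝ) + r + 1) with hg
  have hgpos : ∀ r, 0 ≤ g r := fun r => by positivity
  have hpartial : ∀ M, ∑ r ∈ Finset.range M, g r ^ 2 ≤ 1 / N := by
    intro M
    have hterm : ∀ r : ℕ, g r ^ 2 ≤ 1 / ((N : ℝ) + r) - 1 / ((N : ℝ) + r + 1) := by
      intro r
      have h1 : (0 : ℝ) < (N : ℝ) + r := by positivity
      have h2 : (0 : ℝ) < (N : ℝ) + r + 1 := by positivity
      have hdiff : 1 / ((N : ℝ) + r) - 1 / ((N : ℝ) + r + 1)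
          = 1 / (((N : ℝ) + r) * ((N : ℝ) + r + 1)) := by
        field_simp
        ring
      rw [hdiff, hg]
      simp only [div_pow, one_pow]
      refine one_div_le_one_div_of_le (by positivity) ?_
      nlinarith
    have hconv : ∀ r : ℕ, 1 / ((N : ℝ) + r) - 1 / ((N : ℝ) + r + 1)
        = (fun i : ℕ => 1 / ((N : ℝ) + i)) r - (fun i : ℕ => 1 / ((N : ℝ) + i)) (r + 1) := by
      intro r; push_cast; ring_nf
    calc ∑ r ∈ Finset.range M, g r ^ 2
        ≤ ∑ r ∈ Finset.range M, (1 / ((N : ℝ) + r) - 1 / ((N : ℝ) + r + 1)) :=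
          Finset.sum_le_sum fun r _ => hterm r
      _ = 1 / ((N : ℝ) + (0 : ℕ)) - 1 / ((N : ℝ) + M) := by
          rw [Finset.sum_congr rfl fun r _ => hconv r, Finset.sum_range_sub']
      _ ≤ 1 / N := by
          have hp : (0 : ℝ) ≤ 1 / ((N : ℝ) + M) := by positivity
          have : ((0 : ℕ) : ℝ) = 0 := by norm_num
          rw [this, add_zero]
          linarith
  have hgsq : Summable fun r => g r ^ 2 :=
    summable_of_sum_range_le (fun r => sq_nonneg _) hpartial
  have hgsum : ∑' r, g r ^ 2 ≤ 1 / N :=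
    Real.tsum_le_of_sum_range_le (fun r => sq_nonneg _) hpartial
  have hcsq : Summable fun r => c (r + N) ^ 2 := (summable_nat_add_iff N).2 hc
  have hTN : tl c N ≤ Real.sqrt (∑' r, c (r + N) ^ 2) * Real.sqrt (∑' r, g r ^ 2) := by
    have heq : tl c N = ∑' r, c (r + N) * g r := by
      refine tsum_congr fun r => ?_
      rw [alf, hg]
      push_cast
      rw [mul_one_div]
      ring_nf
    rw [heq]
    exact tsum_mul_le_sqrt (fun r => hc0 _) hgpos hcsq hgsq
  have hT0 : 0 ≤ tl c N := tl_nonneg hc0 N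
  have e1 : 0 ≤ ∑' r, c (r + N) ^ 2 := tsum_nonneg fun r => sq_nonneg _
  have e2 : 0 ≤ ∑' r, g r ^ 2 := tsum_nonneg fun r => sq_nonneg _
  have hsq : tl c N ^ 2 ≤ (∑' r, c (r + N) ^ 2) * (∑' r, g r ^ 2) := by
    calc tl c N ^ 2 ≤ (Real.sqrt (∑' r, c (r + N) ^ 2) * Real.sqrt (∑' r, g r ^ 2)) ^ 2 :=
          pow_le_pow_left₀ hT0 hTN 2
      _ = (∑' r, c (r + N) ^ 2) * (∑' r, g r ^ 2) := by
          rw [mul_pow, Real.sq_sqrt e1, Real.sq_sqrt e2]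
  calc (N : ℝ) * tl c N ^ 2
      ≤ (N : ℝ) * ((∑' r, c (r + N) ^ 2) * (1 / N)) := by
        refine mul_le_mul_of_nonneg_left ?_ (le_of_lt hNpos)
        exact hsq.trans (mul_le_mul_of_nonneg_left hgsum e1)
    _ = ∑' r, c (r + N) ^ 2 := by field_simp

end copson

section copson2

/-- Discrete Copson inequality (p = 2): partial sums version and limit. -/
lemma copson_partial {c : ℕ → ℝ} (hc0 : ∀ m, 0 ≤ c m) (hc : Summable fun m => c m ^ 2) (N : ℕ) :
    ∑ l ∈ Finset.range N, tl c l ^ 2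
      ≤ 2 * Real.sqrt (∑' m, c m ^ 2) * Real.sqrt (∑ l ∈ Finset.range N, tl c l ^ 2)
        + ∑' m, c (m + N) ^ 2 := by
  have h1 := copson_ind hc0 hc N
  have h2 : ∑ l ∈ Finset.range N, c l * tl c l
      ≤ Real.sqrt (∑' m, c m ^ 2) * Real.sqrt (∑ l ∈ Finset.range N, tl c l ^ 2) := by
    have hcs : (∑ l ∈ Finset.range N, c l * tl c l) ^ 2
        ≤ (∑ l ∈ Finset.range N, c l ^ 2) * ∑ l ∈ Finset.range N, tl c l ^ 2 :=
      Finset.sum_mul_sq_le_sq_mul_sq _ _ _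
    have hle : (∑ l ∈ Finset.range N, c l ^ 2) * ∑ l ∈ Finset.range N, tl c l ^ 2
        ≤ (∑' m, c m ^ 2) * ∑ l ∈ Finset.range N, tl c l ^ 2 := by
      refine mul_le_mul_of_nonneg_right ?_ (Finset.sum_nonneg fun l _ => sq_nonneg _)
      exact Summable.sum_le_tsum _ (fun m _ => sq_nonneg _) hc
    have := Real.le_sqrt_of_sq_le (hcs.trans hle)
    rwa [Real.sqrt_mul (tsum_nonneg fun m => sq_nonneg (c m))] at this
  have h3 := tail_sq_bound hc0 hc N
  linarith

lemma copson_summable {c : ℕ → ℝ} (hc0 : ∀ m, 0 ≤ c m) (hc : Summable fun m => c m ^ 2) :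
    Summable fun l => tl c l ^ 2 := by
  set F := Real.sqrt (∑' m, c m ^ 2) with hF
  have hF0 : 0 ≤ F := Real.sqrt_nonneg _
  have hF2 : F ^ 2 = ∑' m, c m ^ 2 := Real.sq_sqrt (tsum_nonneg fun m => sq_nonneg _)
  refine summable_of_sum_range_le (fun l => sq_nonneg _) (c := 6 * F ^ 2) fun N => ?_
  have h1 := copson_partial hc0 hc N
  have htail : ∑' m, c (m + N) ^ 2 ≤ F ^ 2 := by
    rw [hF2, ← Summable.sum_add_tsum_nat_add N hc]
    have : 0 ≤ ∑ i ∈ Finset.range N, c i ^ 2 := Finset.sum_nonneg fun i _ => sq_nonneg _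
    linarith
  set X := ∑ l ∈ Finset.range N, tl c l ^ 2 with hX
  have hX0 : 0 ≤ X := Finset.sum_nonneg fun l _ => sq_nonneg _
  have hs : Real.sqrt X ^ 2 = X := Real.sq_sqrt hX0
  have hs0 : 0 ≤ Real.sqrt X := Real.sqrt_nonneg _
  nlinarith [sq_nonneg (Real.sqrt X - 3 * F)]

lemma copson_sqrt_le {c : ℕ → ℝ} (hc0 : ∀ m, 0 ≤ c m) (hc : Summable fun m => c m ^ 2) :
    Real.sqrt (∑' l, tl c l ^ 2) ≤ 2 * Real.sqrt (∑' m, c m ^ 2) := by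
  set F := Real.sqrt (∑' m, c m ^ 2) with hF
  have hF0 : 0 ≤ F := Real.sqrt_nonneg _
  have hsum := copson_summable hc0 hc
  set X := ∑' l, tl c l ^ 2 with hX
  have hX0 : 0 ≤ X := tsum_nonneg fun l => sq_nonneg _
  -- limit inequality : X ≤ 2 F √X
  have hkey : X ≤ 2 * F * Real.sqrt X := by
    have hlim1 : Filter.Tendsto (fun N => ∑ l ∈ Finset.range N, tl c l ^ 2)
        Filter.atTop (nhds X) := hsum.hasSum.tendsto_sum_nat
    have hlim2 : Filter.Tendsto
        (fun N => 2 * F * Real.sqrt X + ∑' m, c (m + N) ^ 2)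
        Filter.atTop (nhds (2 * F * Real.sqrt X + 0)) :=
      Filter.Tendsto.const_add _ (tendsto_sum_nat_add fun m => c m ^ 2)
    have hptwise : ∀ N, ∑ l ∈ Finset.range N, tl c l ^ 2
        ≤ 2 * F * Real.sqrt X + ∑' m, c (m + N) ^ 2 := by
      intro N
      have h1 := copson_partial hc0 hc N
      have h2 : Real.sqrt (∑ l ∈ Finset.range N, tl c l ^ 2) ≤ Real.sqrt X :=
        Real.sqrt_le_sqrt (Summable.sum_le_tsum _ (fun l _ => sq_nonneg _) hsum)
      nlinarith [Real.sqrt_nonneg (∑ l ∈ Finset.range N, tl c l ^ 2)]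
    have := le_of_tendsto_of_tendsto' hlim1 hlim2 hptwise
    linarith
  -- conclude √X ≤ 2F
  have hs : Real.sqrt X * Real.sqrt X = X := Real.mul_self_sqrt hX0
  rcases le_or_gt (Real.sqrt X) (2 * F) with h | h
  · exact h
  · exfalso
    have hpos : 0 < Real.sqrt X := lt_of_le_of_lt (by positivity) h
    nlinarith

end copson2

/-- The majorant coefficients `H_k = ∑_l a_l α_{l+k}`. -/
def Hh (a c : ℕ → ℝ) (k : ℕ) : ℝ := ∑' l, a l * alf c (l + k)

section mainE

variable {a c : ℕ → ℝ}

lemma summable_a_alf (ha0 : ∀ i, 0 ≤ a i) (hc0 : ∀ m, 0 ≤ c m)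
    (ha : Summable fun i => a i ^ 2) (hc : Summable fun m => c m ^ 2) (k : ℕ) :
    Summable fun l => a l * alf c (l + k) := by
  refine summable_mul_sq ha0 (fun l => alf_nonneg hc0 _) ha ?_
  refine Summable.of_nonneg_of_le (fun l => sq_nonneg _) (fun l => ?_)
    ((summable_nat_add_iff k).2 hc)
  have h1 : alf c (l + k) ≤ c (l + k) := by
    rw [alf]
    exact div_le_self (hc0 _) (le_add_of_nonneg_left (Nat.cast_nonneg _))
  have h2 : 0 ≤ alf c (l + k) := alf_nonneg hc0 _
  nlinarith

lemma Hh_nonneg (ha0 : ∀ i, 0 ≤ a i) (hc0 : ∀ m, 0 ≤ c m) (k : ℕ) : 0 ≤ Hh a c k :=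
  tsum_nonneg fun l => mul_nonneg (ha0 l) (alf_nonneg hc0 _)

lemma mainE (ha0 : ∀ i, 0 ≤ a i) (hc0 : ∀ m, 0 ≤ c m)
    (ha : Summable fun i => a i ^ 2) (hc : Summable fun m => c m ^ 2) (N : ℕ) :
    ∑ j ∈ Finset.range N, (∑ k ∈ Finset.range (j + 1), Hh a c k * a (j - k)) ^ 2
      ≤ (Real.sqrt (∑' i, a i ^ 2) * (Real.sqrt (∑' i, a i ^ 2)
          * (2 * Real.sqrt (∑' m, c m ^ 2)))) ^ 2 := by
  classical
  set A := Real.sqrt (∑' i, a i ^ 2) with hA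
  set F := Real.sqrt (∑' m, c m ^ 2) with hF
  have hA0 : 0 ≤ A := Real.sqrt_nonneg _
  have hF0 : 0 ≤ F := Real.sqrt_nonneg _
  have hA2 : A ^ 2 = ∑' i, a i ^ 2 := Real.sq_sqrt (tsum_nonneg fun i => sq_nonneg _)
  -- the vectors Z l k and V l in Euclidean space
  set Z : ℕ → ℕ → EuclideanSpace ℝ (Fin N) := fun l k =>
    (WithLp.equiv 2 (Fin N → ℝ)).symm
      (fun j => if k ≤ (j : ℕ) then a l * alf c (l + k) * a ((j : ℕ) - k) else 0) with hZ
  set V : ℕ → EuclideanSpace ℝ (Fin N) := fun l => ∑ k ∈ Finset.range N, Z l k with hV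
  have hZapply : ∀ l k (j : Fin N), Z l k j
      = if k ≤ (j : ℕ) then a l * alf c (l + k) * a ((j : ℕ) - k) else 0 := by
    intro l k j; rfl
  have hVapply : ∀ l (j : Fin N),
      V l j = ∑ k ∈ Finset.range ((j : ℕ) + 1), a l * alf c (l + k) * a ((j : ℕ) - k) := by
    intro l j
    have h1 : V l j = ∑ k ∈ Finset.range N, Z l k j := by
      rw [hV]
      exact map_sum (EuclideanSpace.proj (𝕜 := ℝ) j) (fun k => Z l k) (Finset.range N)
    rw [h1]
    rw [Finset.sum_congr rfl fun k _ => hZapply l k j]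
    rw [← Finset.sum_subset (Finset.range_subset_range.2 j.isLt)]
    · exact Finset.sum_congr rfl fun k hk => if_pos (by
        simp only [Finset.mem_range] at hk; omega)
    · intro k _ hk
      simp only [Finset.mem_range] at hk
      exact if_neg (by omega)
  have hZnorm : ∀ l k, ‖Z l k‖ ≤ a l * alf c (l + k) * A := by
    intro l k
    rw [EuclideanSpace.norm_eq]
    have hsum : ∑ j : Fin N, ‖Z l k j‖ ^ 2
        ≤ (a l * alf c (l + k)) ^ 2 * ∑' i, a i ^ 2 := by
      have hpt : ∀ j : Fin N, ‖Z l k j‖ ^ 2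
          = (a l * alf c (l + k)) ^ 2 * (if k ≤ (j : ℕ) then a ((j : ℕ) - k) ^ 2 else 0) := by
        intro j
        rw [hZapply]
        by_cases h : k ≤ (j : ℕ)
        · simp only [h, if_true, Real.norm_eq_abs, sq_abs]; ring
        · simp [h]
      rw [Finset.sum_congr rfl fun j _ => hpt j, ← Finset.mul_sum]
      refine mul_le_mul_of_nonneg_left ?_ (sq_nonneg _)
      -- ∑_{j : Fin N} ite ≤ ∑' a^2
      rw [Fin.sum_univ_eq_sum_range (fun j => if k ≤ j then a (j - k) ^ 2 else 0) N]
      rw [← Finset.sum_filter]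
      have himg : ∑ j ∈ (Finset.range N).filter (fun j => k ≤ j), a (j - k) ^ 2
          = ∑ i ∈ ((Finset.range N).filter (fun j => k ≤ j)).image (fun j => j - k),
              a i ^ 2 := by
        rw [Finset.sum_image]
        intro x hx y hy hxy
        simp only [Finset.mem_coe, Finset.mem_filter] at hx hy hxy
        omega
      rw [himg]
      exact Summable.sum_le_tsum _ (fun i _ => sq_nonneg _) ha
    calc Real.sqrt (∑ j : Fin N, ‖Z l k j‖ ^ 2)
        ≤ Real.sqrt ((a l * alf c (l + k)) ^ 2 * ∑' i, a i ^ 2) := Real.sqrt_le_sqrt hsum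
      _ = a l * alf c (l + k) * A := by
          rw [Real.sqrt_mul (sq_nonneg _), Real.sqrt_sq
            (mul_nonneg (ha0 l) (alf_nonneg hc0 _)), hA]
  have hVnorm : ∀ l, ‖V l‖ ≤ A * (a l * tl c l) := by
    intro l
    calc ‖V l‖ ≤ ∑ k ∈ Finset.range N, ‖Z l k‖ := norm_sum_le _ _
      _ ≤ ∑ k ∈ Finset.range N, a l * alf c (l + k) * A :=
          Finset.sum_le_sum fun k _ => hZnorm l k
      _ = (a l * A) * ∑ k ∈ Finset.range N, alf c (l + k) := by
          rw [Finset.mul_sum]; exact Finset.sum_congr rfl fun k _ => by ring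
      _ ≤ (a l * A) * tl c l := by
          refine mul_le_mul_of_nonneg_left ?_ (mul_nonneg (ha0 l) hA0)
          rw [tl_eq]
          exact Summable.sum_le_tsum _ (fun k _ => alf_nonneg hc0 _) (summable_alf_add hc0 hc l)
      _ = A * (a l * tl c l) := by ring
  have hsumatl : Summable fun l => a l * tl c l :=
    summable_mul_sq ha0 (fun l => tl_nonneg hc0 l) ha (copson_summable hc0 hc)
  have hsumM : Summable fun l => A * (a l * tl c l) := hsumatl.mul_left A
  have hVsum : Summable V :=
    Summable.of_norm_bounded hsumM hVnorm
  set W := ∑' l, V l with hW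
  have hWapply : ∀ j : Fin N, W j = ∑' l, V l j := by
    intro j
    rw [hW]
    exact ContinuousLinearMap.map_tsum (EuclideanSpace.proj j) hVsum
  have hWeq : ∀ j : Fin N,
      W j = ∑ k ∈ Finset.range ((j : ℕ) + 1), Hh a c k * a ((j : ℕ) - k) := by
    intro j
    rw [hWapply j]
    have h1 : ∀ l, V l j
        = ∑ k ∈ Finset.range ((j : ℕ) + 1), a l * alf c (l + k) * a ((j : ℕ) - k) := fun l =>
      hVapply l j
    rw [tsum_congr h1]
    rw [Summable.tsum_finsetSum fun k _ => ((summable_a_alf ha0 hc0 ha hc k).mul_right (a ((j : ℕ) - k))).congr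
      (fun l => by ring)]
    refine Finset.sum_congr rfl fun k _ => ?_
    rw [Hh, ← tsum_mul_right]
  have hWnn : ∀ j : Fin N, 0 ≤ W j := by
    intro j
    rw [hWapply j, tsum_congr (fun l => hVapply l j)]
    exact tsum_nonneg fun l => Finset.sum_nonneg fun k _ =>
      mul_nonneg (mul_nonneg (ha0 l) (alf_nonneg hc0 _)) (ha0 _)
  -- final chain
  have hWnorm : ‖W‖ ≤ A * (A * (2 * F)) := by
    have h1 : ‖W‖ ≤ ∑' l, ‖V l‖ :=
      norm_tsum_le_tsum_norm (Summable.of_nonneg_of_le (fun l => norm_nonneg _) hVnorm hsumM)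
    have h2 : ∑' l, ‖V l‖ ≤ ∑' l, A * (a l * tl c l) :=
      Summable.tsum_le_tsum hVnorm
        (Summable.of_nonneg_of_le (fun l => norm_nonneg _) hVnorm hsumM) hsumM
    have h3 : ∑' l, A * (a l * tl c l) = A * ∑' l, a l * tl c l := tsum_mul_left
    have h4 : ∑' l, a l * tl c l
        ≤ Real.sqrt (∑' l, a l ^ 2) * Real.sqrt (∑' l, tl c l ^ 2) :=
      tsum_mul_le_sqrt ha0 (fun l => tl_nonneg hc0 l) ha (copson_summable hc0 hc)
    have h5 : Real.sqrt (∑' l, tl c l ^ 2) ≤ 2 * F := copson_sqrt_le hc0 hc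
    have h6 : Real.sqrt (∑' l, a l ^ 2) = A := rfl
    calc ‖W‖ ≤ ∑' l, ‖V l‖ := h1
      _ ≤ A * ∑' l, a l * tl c l := by rw [← h3]; exact h2
      _ ≤ A * (A * (2 * F)) := by
          refine mul_le_mul_of_nonneg_left ?_ hA0
          calc ∑' l, a l * tl c l ≤ A * Real.sqrt (∑' l, tl c l ^ 2) := by rw [← h6]; exact h4
            _ ≤ A * (2 * F) := mul_le_mul_of_nonneg_left h5 hA0
  -- put together
  have hfinal : ∑ j ∈ Finset.range N,
      (∑ k ∈ Finset.range (j + 1), Hh a c k * a (j - k)) ^ 2 = ‖W‖ ^ 2 := by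
    rw [← Fin.sum_univ_eq_sum_range
      (fun j => (∑ k ∈ Finset.range (j + 1), Hh a c k * a (j - k)) ^ 2) N]
    rw [EuclideanSpace.norm_eq, Real.sq_sqrt (Finset.sum_nonneg fun j _ => sq_nonneg _)]
    refine Finset.sum_congr rfl fun j _ => ?_
    rw [← hWeq j, Real.norm_eq_abs, sq_abs]
  rw [hfinal]
  exact pow_le_pow_left₀ (norm_nonneg W) hWnorm 2

end mainE

/-!
STATEMENT 2 (Lemma 4.2, bound (20)): For any `u ∈ L²₊(𝕋)`, `1 ≤ n ≤ ∞` and `κ ≥ 1`,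
the operator `f ↦ u · Π_n(ū · Π_n R₀(κ) f)` on `L²₊` is bounded with operator norm
at most `2‖u‖²_{L²}`, stated on the Fourier side.
-/
theorem stmt2 (u : ℕ → ℂ) (hu : Summable fun k : ℕ => ‖u k‖ ^ 2)
    (n : ℕ∞) (hn : 1 ≤ n) (κ : ℝ) (hκ : 1 ≤ κ)
    (f : ℕ → ℂ) (hf : Summable fun k : ℕ => ‖f k‖ ^ 2) :
    l2norm (mulH u (trunc n (mulConjH u (trunc n (res κ f))))) ≤
      2 * l2norm u ^ 2 * l2norm f := by
  classical
  set a : ℕ → ℝ := fun k => ‖u k‖ with ha'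
  set c : ℕ → ℝ := fun k => ‖f k‖ with hc'
  have ha0 : ∀ i, 0 ≤ a i := fun i => norm_nonneg _
  have hc0 : ∀ m, 0 ≤ c m := fun m => norm_nonneg _
  have ha : Summable fun i => a i ^ 2 := hu
  have hc : Summable fun m => c m ^ 2 := hf
  set A := Real.sqrt (∑' i, a i ^ 2) with hA
  set F := Real.sqrt (∑' m, c m ^ 2) with hF
  have hA0 : 0 ≤ A := Real.sqrt_nonneg _
  have hF0 : 0 ≤ F := Real.sqrt_nonneg _
  set Q := mulH u (trunc n (mulConjH u (trunc n (res κ f)))) with hQ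
  -- pointwise bound for the resolvent part
  have hG : ∀ m, ‖trunc n (res κ f) m‖ ≤ alf c m := by
    intro m
    have htr : ‖trunc n (res κ f) m‖ ≤ ‖res κ f m‖ := by
      rw [trunc]
      split_ifs
      · exact le_rfl
      · simp
    refine htr.trans ?_
    have h1 : ‖res κ f m‖ = c m / ((m : ℝ) + κ) := by
      rw [res, norm_div]
      congr 1
      have h2 : ((m : ℂ) + (κ : ℂ)) = (((m : ℝ) + κ : ℝ) : ℂ) := by push_cast; ring
      rw [h2, Complex.norm_real, Real.norm_eq_abs]
      exact abs_of_nonneg (by positivity)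
    rw [h1, alf]
    exact div_le_div_of_nonneg_left (hc0 m) (by positivity) (by linarith)
  -- bound on the middle coefficients
  have hB : ∀ k, ‖trunc n (mulConjH u (trunc n (res κ f))) k‖ ≤ Hh a c k := by
    intro k
    have htr : ‖trunc n (mulConjH u (trunc n (res κ f))) k‖
        ≤ ‖mulConjH u (trunc n (res κ f)) k‖ := by
      rw [trunc]
      split_ifs
      · exact le_rfl
      · simp
    refine htr.trans ?_
    have hmaj : Summable fun l => a l * alf c (l + k) := summable_a_alf ha0 hc0 ha hc k
    have hnorm_le : ∀ l, ‖conj (u l) * trunc n (res κ f) (l + k)‖ ≤ a l * alf c (l + k) := by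
      intro l
      rw [norm_mul, RCLike.norm_conj]
      exact mul_le_mul_of_nonneg_left (hG _) (ha0 l)
    have hsn : Summable fun l => ‖conj (u l) * trunc n (res κ f) (l + k)‖ :=
      Summable.of_nonneg_of_le (fun l => norm_nonneg _) hnorm_le hmaj
    calc ‖mulConjH u (trunc n (res κ f)) k‖
        ≤ ∑' l, ‖conj (u l) * trunc n (res κ f) (l + k)‖ := norm_tsum_le_tsum_norm hsn
      _ ≤ ∑' l, a l * alf c (l + k) := Summable.tsum_le_tsum hnorm_le hsn hmaj
      _ = Hh a c k := rfl
  -- pointwise bound for the full product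
  have hQle : ∀ j, ‖Q j‖ ≤ ∑ k ∈ Finset.range (j + 1), Hh a c k * a (j - k) := by
    intro j
    calc ‖Q j‖ ≤ ∑ k ∈ Finset.range (j + 1), ‖u (j - k) * trunc n (mulConjH u (trunc n (res κ f))) k‖ :=
          norm_sum_le _ _
      _ ≤ ∑ k ∈ Finset.range (j + 1), Hh a c k * a (j - k) := by
          refine Finset.sum_le_sum fun k _ => ?_
          rw [norm_mul]
          calc ‖u (j - k)‖ * ‖trunc n (mulConjH u (trunc n (res κ f))) k‖
              ≤ a (j - k) * Hh a c k :=
                mul_le_mul_of_nonneg_left (hB k) (ha0 (j - k))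
            _ = Hh a c k * a (j - k) := mul_comm _ _
  have hsumsq : ∀ N, ∑ j ∈ Finset.range N, ‖Q j‖ ^ 2 ≤ (A * (A * (2 * F))) ^ 2 := by
    intro N
    calc ∑ j ∈ Finset.range N, ‖Q j‖ ^ 2
        ≤ ∑ j ∈ Finset.range N, (∑ k ∈ Finset.range (j + 1), Hh a c k * a (j - k)) ^ 2 :=
          Finset.sum_le_sum fun j _ => pow_le_pow_left₀ (norm_nonneg _) (hQle j) 2
      _ ≤ (A * (A * (2 * F))) ^ 2 := mainE ha0 hc0 ha hc N
  have ht : ∑' j, ‖Q j‖ ^ 2 ≤ (A * (A * (2 * F))) ^ 2 :=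
    Real.tsum_le_of_sum_range_le (fun j => sq_nonneg _) hsumsq
  have hAu : l2norm u = A := rfl
  have hFf : l2norm f = F := rfl
  calc l2norm Q = Real.sqrt (∑' j, ‖Q j‖ ^ 2) := rfl
    _ ≤ Real.sqrt ((A * (A * (2 * F))) ^ 2) := Real.sqrt_le_sqrt ht
    _ = A * (A * (2 * F)) := Real.sqrt_sq (by positivity)
    _ = 2 * l2norm u ^ 2 * l2norm f := by rw [hAu, hFf]; ring
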